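/- Let H be a CDF on [θL, θH] with continuous density h > 0 on (θL, θH), let μ ∈ (θL, θH) and q̂ > 0, and suppose [μ − 2q̂, μ + 2q̂] ⊆ [θL, θH]. Then there exists a unique x1 ∈ (μ − 2q̂, μ) such that ∫_{x1}^{x1 + 2q̂} (θ − μ)·h(θ) dθ = 0. Equivalently, there is a unique pair (x1, x2) with x1 ≤ μ ≤ x2, x2 = x1 + 2q̂, and E_H[θ | x1 ≤ θ ≤ x2] = μ. -/

import Mathlib

open Set intervalIntegral MeasureTheory

/-- With a continuous density `h > 0` on `(θL, θH)`,
`μ ∈ (θL, θH)`, `q̂ > 0` and `[μ−2q̂, μ+2q̂] ⊆ [θL, θH]`, there is a unique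
`x1 ∈ (μ−2q̂, μ)` with `∫_{x1}^{x1+2q̂} (θ−μ)·h(θ) dθ = 0`, i.e. a unique pair
`(x1, x2)` with `x2 = x1 + 2q̂` and conditional mean `μ` on `[x1, x2]`. -/
theorem stmt_11 (θL θH μ qhat : ℝ) (hθ : θL < θH)
    (h : ℝ → ℝ) (hcont : ContinuousOn h (Set.Icc θL θH))
    (hpos : ∀ θ ∈ Set.Ioo θL θH, 0 < h θ)
    (hμ : μ ∈ Set.Ioo θL θH) (hq : 0 < qhat)
    (hsub : Set.Icc (μ - 2 * qhat) (μ + 2 * qhat) ⊆ Set.Icc θL θH) :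
    ∃! x1 : ℝ, x1 ∈ Set.Ioo (μ - 2 * qhat) μ ∧
      (∫ θ in x1..(x1 + 2 * qhat), (θ - μ) * h θ) = 0 := by
  -- extend h continuously to all of ℝ
  set hx : ℝ → ℝ := Set.IccExtend hθ.le (Set.Icc θL θH |>.restrict h) with hhx
  have hhxcont : Continuous hx := hcont.restrict.Icc_extend'
  have hhxeq : ∀ θ ∈ Set.Icc θL θH, hx θ = h θ := fun θ hθ' => by
    simp [hhx, Set.IccExtend_of_mem hθ.le _ hθ']
    rfl
  -- endpoints of the window are in [θL, θH]
  have hL : θL ≤ μ - 2 * qhat := (hsub (Set.left_mem_Icc.2 (by linarith))).1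
  have hR : μ + 2 * qhat ≤ θH := (hsub (Set.right_mem_Icc.2 (by linarith))).2
  set g : ℝ → ℝ := fun θ => (θ - μ) * hx θ with hg
  have hgcont : Continuous g := (continuous_id.sub continuous_const).mul hhxcont
  have hgint : ∀ a b : ℝ, IntervalIntegrable g volume a b := fun a b =>
    hgcont.intervalIntegrable a b
  set G : ℝ → ℝ := fun x => ∫ θ in μ..x, g θ with hG
  have hGderiv : ∀ x : ℝ, HasDerivAt G (g x) x := fun x =>
    intervalIntegral.integral_hasDerivAt_right (hgint μ x)
      hgcont.stronglyMeasurable.stronglyMeasurableAtFilter hgcont.continuousAt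
  set F : ℝ → ℝ := fun x => G (x + 2 * qhat) - G x with hF
  have hFeq : ∀ x : ℝ, F x = ∫ θ in x..(x + 2 * qhat), g θ := by
    intro x
    have := intervalIntegral.integral_add_adjacent_intervals (hgint x μ) (hgint μ (x + 2 * qhat))
    simp only [hF, hG]
    rw [← this, intervalIntegral.integral_symm μ x]
    ring
  have hFderiv : ∀ x : ℝ, HasDerivAt F (g (x + 2 * qhat) - g x) x := fun x => by
    have h1 : HasDerivAt (fun x => G (x + 2 * qhat)) (g (x + 2 * qhat)) x := by
      simpa [Function.comp_def] using (hGderiv (x + 2 * qhat)).comp x ((hasDerivAt_id x).add_const (2 * qhat))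
    exact h1.sub (hGderiv x)
  -- original integral equals F on the relevant range
  have hFmatch : ∀ x ∈ Set.Ioo (μ - 2 * qhat) μ,
      (∫ θ in x..(x + 2 * qhat), (θ - μ) * h θ) = F x := by
    intro x hx'
    rw [hFeq]
    apply intervalIntegral.integral_congr
    intro θ hθ'
    rw [Set.uIcc_of_le (by linarith [hx'.1]), Set.mem_Icc] at hθ'
    have : θ ∈ Set.Icc θL θH := ⟨by linarith [hθ'.1, hx'.1], by linarith [hθ'.2, hx'.2]⟩
    simp [hg, hhxeq θ this]
  -- strict monotonicity on [μ - 2q̂, μ]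
  have hGmono : StrictMonoOn F (Set.Icc (μ - 2 * qhat) μ) := by
    apply strictMonoOn_of_deriv_pos (convex_Icc _ _)
      (fun x _ => (hFderiv x).continuousAt.continuousWithinAt)
    intro x hx'
    rw [interior_Icc] at hx'
    rw [(hFderiv x).deriv]
    have hx1 : x ∈ Set.Ioo θL θH := ⟨by linarith [hx'.1], lt_trans hx'.2 hμ.2⟩
    have hx2 : x + 2 * qhat ∈ Set.Ioo θL θH :=
      ⟨lt_trans hμ.1 (by linarith [hx'.1]), by linarith [hx'.2]⟩
    have e1 : g x = (x - μ) * h x := by simp [hg, hhxeq x (Set.Ioo_subset_Icc_self hx1)]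
    have e2 : g (x + 2 * qhat) = (x + 2 * qhat - μ) * h (x + 2 * qhat) := by
      simp [hg, hhxeq _ (Set.Ioo_subset_Icc_self hx2)]
    rw [e1, e2]
    have := hpos x hx1
    have := hpos _ hx2
    nlinarith [hx'.1, hx'.2]
  -- sign at the endpoints
  have hFneg : F (μ - 2 * qhat) < 0 := by
    rw [hFeq]
    have : (0:ℝ) < ∫ θ in (μ - 2 * qhat)..(μ - 2 * qhat + 2 * qhat), -g θ := by
      apply intervalIntegral.intervalIntegral_pos_of_pos_on
        ((hgcont.neg).intervalIntegrable _ _)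
      · intro θ hθ'
        have h1 : θ ∈ Set.Ioo θL θH := ⟨by linarith [hθ'.1], by linarith [hθ'.2, hμ.2]⟩
        have : g θ = (θ - μ) * h θ := by simp [hg, hhxeq θ (Set.Ioo_subset_Icc_self h1)]
        rw [Pi.neg_apply, this]
        have := hpos θ h1
        nlinarith [hθ'.2]
      · linarith
    rw [intervalIntegral.integral_neg] at this
    linarith
  have hFpos : 0 < F μ := by
    rw [hFeq]
    apply intervalIntegral.intervalIntegral_pos_of_pos_on (hgint _ _)
    · intro θ hθ'
      have h1 : θ ∈ Set.Ioo θL θH := ⟨lt_trans hμ.1 hθ'.1, by linarith [hθ'.2]⟩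
      have : g θ = (θ - μ) * h θ := by simp [hg, hhxeq θ (Set.Ioo_subset_Icc_self h1)]
      rw [this]
      have := hpos θ h1
      nlinarith [hθ'.1]
    · linarith
  -- existence via IVT
  have hFcont : ContinuousOn F (Set.Icc (μ - 2 * qhat) μ) :=
    fun x _ => (hFderiv x).continuousAt.continuousWithinAt
  have hmem : (0:ℝ) ∈ Set.Ioo (F (μ - 2 * qhat)) (F μ) := ⟨hFneg, hFpos⟩
  obtain ⟨x1, hx1mem, hx1val⟩ := intermediate_value_Ioo (by linarith : μ - 2 * qhat ≤ μ)
    hFcont hmem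
  refine ⟨x1, ⟨hx1mem, by rw [hFmatch x1 hx1mem, hx1val]⟩, ?_⟩
  rintro y ⟨hymem, hyval⟩
  rw [hFmatch y hymem] at hyval
  have hy' : F y = F x1 := by rw [hyval, hx1val]
  exact hGmono.injOn (Set.Ioo_subset_Icc_self hymem) (Set.Ioo_subset_Icc_self hx1mem) hy'
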